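/- arXiv:math/9909201 — 2 statements merged into one kernel-verified Lean document; each statement's English description precedes it below -/
import Mathlib

section
/- Lemma 1.2: Let q and q' be similar integral quadratic forms in an odd number of variables m = 2k+1 ≥ 3 and let p be a prime not dividing det q. Then R(q, p²·q') is the disjoint union of R*(q, p²·q') and p·R(q, q'); here R(q,q') ⊆ GL_m(ℤ), so in particular this part is empty when q and q' are not integrally equivalent. Moreover, every automorph in p·R(q,q') lies in the double coset GL_m(ℤ)·(p·1_m)·GL_m(ℤ), while every primitive automorph M ∈ R*(q, p²·q') lies in GL_m(ℤ)·D_p(d)·GL_m(ℤ) for some d with 1 ≤ d ≤ k (and b = m − 2d). -/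
open Matrix

/-- An integral quadratic form in `m` variables, encoded by its matrix:
a symmetric integer matrix with even diagonal entries. -/
def IsIntegralQF {m : ℕ} (Q : Matrix (Fin m) (Fin m) ℤ) : Prop :=
  Q.IsSymm ∧ ∀ i, 2 ∣ Q i i

/-- `R(q,q')`: integral representations of the form with matrix `Q'` by the form
with matrix `Q`. -/
def Reps {m n : ℕ} (Q : Matrix (Fin m) (Fin m) ℤ) (Q' : Matrix (Fin n) (Fin n) ℤ) :
    Set (Matrix (Fin m) (Fin n) ℤ) :=
  {A | Aᵀ * Q * A = Q'}

/-- `R*(q,q')`: primitive integral representations (entries have gcd 1). -/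
def PrimReps {m n : ℕ} (Q : Matrix (Fin m) (Fin m) ℤ) (Q' : Matrix (Fin n) (Fin n) ℤ) :
    Set (Matrix (Fin m) (Fin n) ℤ) :=
  {A | Aᵀ * Q * A = Q' ∧
    Finset.gcd Finset.univ (fun ij : Fin m × Fin n => A ij.1 ij.2) = 1}

/-- `q'` is similar to `q`: equal determinants and `R(q, a·q')` nonempty for some `a`
coprime to `det q`. -/
def SimilarQF {m : ℕ} (Q Q' : Matrix (Fin m) (Fin m) ℤ) : Prop :=
  Q'.det = Q.det ∧ ∃ a : ℤ, IsCoprime a Q.det ∧ (Reps Q (a • Q')).Nonempty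

/-- membership in the double coset `GL_m(ℤ)·D·GL_m(ℤ)`. -/
def InDoubleCoset {m : ℕ} (D M : Matrix (Fin m) (Fin m) ℤ) : Prop :=
  ∃ U V : Matrix (Fin m) (Fin m) ℤ, IsUnit U.det ∧ IsUnit V.det ∧ M = U * D * V

/-- The matrix `D_p(d)` of the form (1.2): diagonal with `d` entries `1`,
then `m - 2d` entries `p`, then `d` entries `p²`. -/
def Dmat (p m d : ℕ) : Matrix (Fin m) (Fin m) ℤ :=
  Matrix.diagonal fun i =>
    if (i : ℕ) < d then 1 else if (i : ℕ) < m - d then (p : ℤ) else (p : ℤ)^2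


lemma exists_UDV {m : ℕ} (A : Matrix (Fin m) (Fin m) ℤ) (hA : A.det ≠ 0) :
    ∃ (U V : Matrix (Fin m) (Fin m) ℤ) (w : Fin m → ℤ), IsUnit U.det ∧ IsUnit V.det ∧
      A = U * Matrix.diagonal w * V := by
  classical
  set P : Module.Basis (Fin m) ℤ (Fin m → ℤ) := Pi.basisFun ℤ (Fin m)
  set L : (Fin m → ℤ) →ₗ[ℤ] (Fin m → ℤ) := A.mulVecLin with hL
  have hinj : Function.Injective L := by
    have : ∀ v, A *ᵥ v = 0 → v = 0 := by
      intro v hv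
      have h2 : A.adjugate *ᵥ (A *ᵥ v) = 0 := by rw [hv, Matrix.mulVec_zero]
      rw [Matrix.mulVec_mulVec, Matrix.adjugate_mul, Matrix.smul_mulVec,
        Matrix.one_mulVec] at h2
      exact (smul_eq_zero.mp h2).resolve_left hA
    rw [← LinearMap.ker_eq_bot, hL, Matrix.ker_mulVecLin_eq_bot_iff]
    exact this
  set N : Submodule ℤ (Fin m → ℤ) := LinearMap.range L with hN
  obtain ⟨n, snf⟩ := N.smithNormalForm P
  have hnm : n = m := by
    have h1 : Module.finrank ℤ N = n := by
      rw [Module.finrank_eq_card_basis snf.bN, Fintype.card_fin]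
    have h2 : Module.finrank ℤ N = m := by
      rw [← (LinearEquiv.ofInjective L hinj).finrank_eq]
      simp [Module.finrank_fintype_fun_eq_card]
    omega
  subst hnm
  -- σ : permutation from f
  have hfbij : Function.Bijective snf.f := by
    exact (Finite.injective_iff_bijective).mp snf.f.injective
  set σ : Equiv.Perm (Fin n) := Equiv.ofBijective snf.f hfbij with hσ
  set φ : (Fin n → ℤ) ≃ₗ[ℤ] N := LinearEquiv.ofInjective L hinj with hφ
  have hLfact : L = N.subtype.comp (φ : (Fin n → ℤ) →ₗ[ℤ] N) := by
    ext x j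
    rfl
  set V : Matrix (Fin n) (Fin n) ℤ := LinearMap.toMatrix P snf.bN (φ : (Fin n → ℤ) →ₗ[ℤ] N) with hV
  set B : Matrix (Fin n) (Fin n) ℤ := LinearMap.toMatrix snf.bN P N.subtype with hB
  have hA' : A = B * V := by
    have : A = LinearMap.toMatrix P P L := by
      rw [LinearMap.toMatrix_eq_toMatrix']
      rw [hL, ← Matrix.toLin'_apply' A, LinearMap.toMatrix'_toLin']
    rw [this, hLfact, LinearMap.toMatrix_comp P snf.bN P]
  have hVunit : IsUnit V.det := LinearEquiv.isUnit_det φ P snf.bN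
  set U0 : Matrix (Fin n) (Fin n) ℤ := LinearMap.toMatrix snf.bM P LinearMap.id with hU0
  have hU0unit : IsUnit U0.det := by
    have := LinearEquiv.isUnit_det (LinearEquiv.refl ℤ (Fin n → ℤ)) snf.bM P
    rwa [show ((LinearEquiv.refl ℤ (Fin n → ℤ)) : (Fin n → ℤ) →ₗ[ℤ] (Fin n → ℤ)) = LinearMap.id from rfl] at this
  have hU0apply : ∀ i j, U0 i j = snf.bM j i := by
    intro i j
    simp [hU0, LinearMap.toMatrix_apply, Module.Basis.toMatrix_apply, P]
  -- B = U0 * permMatrix σ * diagonal a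
  have hBfact : B = (U0 * (σ⁻¹.permMatrix ℤ)) * Matrix.diagonal snf.a := by
    ext i j
    rw [Matrix.mul_diagonal]
    rw [show (σ⁻¹.permMatrix ℤ) = (σ⁻¹).toPEquiv.toMatrix from rfl, PEquiv.mul_toMatrix_toPEquiv]
    have hBij : B i j = (snf.bN j : Fin n → ℤ) i := by
      simp [hB, LinearMap.toMatrix_apply, P]
    rw [hBij, snf.snf j]
    simp only [Matrix.submatrix_apply, id_eq]
    have h1 : (Equiv.symm σ⁻¹) j = snf.f j := rfl
    rw [h1, hU0apply]
    simp [Pi.smul_apply, mul_comm]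
  refine ⟨U0 * (σ⁻¹.permMatrix ℤ), V, snf.a, ?_, hVunit, ?_⟩
  · rw [Matrix.det_mul]
    exact hU0unit.mul (by rw [Matrix.det_permutation]; exact Units.isUnit _)
  · rw [hA', hBfact]


-- down-closed sets in Fin m are initial segments
lemma down_closed_mem {m : ℕ} (S : Finset (Fin m))
    (h : ∀ i j : Fin m, j ≤ i → i ∈ S → j ∈ S) (i : Fin m) :
    i ∈ S ↔ (i : ℕ) < S.card := by
  constructor
  · intro hi
    have hsub : Finset.Iic i ⊆ S := fun j hj => h i j (Finset.mem_Iic.mp hj) hi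
    have := Finset.card_le_card hsub
    rw [Fin.card_Iic] at this
    omega
  · intro hlt
    by_contra hni
    have hsub : S ⊆ Finset.Iio i := by
      intro j hj
      rw [Finset.mem_Iio]
      by_contra hji
      exact hni (h j i (not_lt.mp hji) hj)
    have := Finset.card_le_card hsub
    rw [Fin.card_Iio] at this
    omega

lemma up_closed_mem {m : ℕ} (S : Finset (Fin m))
    (h : ∀ i j : Fin m, i ≤ j → i ∈ S → j ∈ S) (i : Fin m) :
    i ∈ S ↔ m - S.card ≤ (i : ℕ) := by
  constructor
  · intro hi
    have hsub : Finset.Ici i ⊆ S := fun j hj => h i j (Finset.mem_Ici.mp hj) hi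
    have := Finset.card_le_card hsub
    rw [Fin.card_Ici] at this
    omega
  · intro hlt
    by_contra hni
    have hsub : S ⊆ Finset.Ioi i := by
      intro j hj
      rw [Finset.mem_Ioi]
      by_contra hji
      exact hni (h j i (not_lt.mp hji) hj)
    have := Finset.card_le_card hsub
    rw [Fin.card_Ioi] at this
    have := i.isLt
    omega

lemma monotone_shape {m : ℕ} (g : Fin m → ℕ) (mono : Monotone g) (hle : ∀ i, g i ≤ 2)
    {d : ℕ} (h0 : (Finset.univ.filter (fun i => g i = 0)).card = d)
    (h2 : (Finset.univ.filter (fun i => g i = 2)).card = d) (i : Fin m) :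
    g i = if (i : ℕ) < d then 0 else if (i : ℕ) < m - d then 1 else 2 := by
  have hm0 : ∀ j : Fin m, j ∈ Finset.univ.filter (fun i => g i = 0) ↔ (j : ℕ) < d := by
    intro j
    rw [← h0]
    apply down_closed_mem
    intro a b hba ha
    simp only [Finset.mem_filter, Finset.mem_univ, true_and] at ha ⊢
    have := mono hba
    omega
  have hm2 : ∀ j : Fin m, j ∈ Finset.univ.filter (fun i => g i = 2) ↔ m - d ≤ (j : ℕ) := by
    intro j
    rw [← h2]
    apply up_closed_mem
    intro a b hab ha
    simp only [Finset.mem_filter, Finset.mem_univ, true_and] at ha ⊢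
    have := mono hab
    have := hle b
    omega
  have h0i := hm0 i
  have h2i := hm2 i
  simp only [Finset.mem_filter, Finset.mem_univ, true_and] at h0i h2i
  have := hle i
  split_ifs with hlt hlt2 <;> omega

-- conjugating a diagonal matrix by a permutation
lemma diagonal_perm {m : ℕ} (v : Fin m → ℤ) (σ : Equiv.Perm (Fin m)) :
    Matrix.diagonal v =
      (σ⁻¹.permMatrix ℤ) * Matrix.diagonal (v ∘ σ) * (σ.permMatrix ℤ) := by
  rw [show (σ⁻¹.permMatrix ℤ) = σ⁻¹.toPEquiv.toMatrix from rfl,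
    show (σ.permMatrix ℤ) = σ.toPEquiv.toMatrix from rfl,
    PEquiv.toMatrix_toPEquiv_mul, PEquiv.mul_toMatrix_toPEquiv]
  ext i j
  simp only [Matrix.submatrix_apply, Matrix.diagonal_apply, Function.comp_apply,
    Equiv.Perm.inv_def]
  by_cases hij : i = j
  · subst hij; simp
  · rw [if_neg hij, if_neg]
    intro hcon
    exact hij (σ.symm.injective hcon)

lemma permMatrix_det_isUnit {m : ℕ} (σ : Equiv.Perm (Fin m)) :
    IsUnit ((σ.permMatrix ℤ)).det := by
  rw [Matrix.det_permutation]
  exact Units.isUnit _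

-- transfer of filter-cards along a permutation
lemma card_filter_comp {m : ℕ} (e : Fin m → ℕ) (σ : Equiv.Perm (Fin m)) (t : ℕ) :
    (Finset.univ.filter (fun i => e (σ i) = t)).card =
      (Finset.univ.filter (fun i => e i = t)).card := by
  apply Finset.card_bij (fun i _ => σ i)
  · intro a ha
    simp only [Finset.mem_filter, Finset.mem_univ, true_and] at ha ⊢
    exact ha
  · intro a _ b _ hab
    exact σ.injective hab
  · intro b hb
    refine ⟨σ⁻¹ b, ?_, by simp⟩
    simp only [Finset.mem_filter, Finset.mem_univ, true_and] at hb ⊢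
    simpa using hb

/-- Lemma 1.2. -/
theorem lemma_1_2 {k : ℕ} (hk : 1 ≤ k) {m : ℕ} (hm : m = 2 * k + 1)
    (Q Q' : Matrix (Fin m) (Fin m) ℤ)
    (hQI : IsIntegralQF Q) (hQ'I : IsIntegralQF Q')
    (hQns : Q.det ≠ 0) (hsim : SimilarQF Q Q')
    (p : ℕ) (hp : p.Prime) (hpd : ¬ (p : ℤ) ∣ Q.det) :
    Reps Q (((p : ℤ)^2) • Q') =
        PrimReps Q (((p : ℤ)^2) • Q') ∪ (fun M => (p : ℤ) • M) '' (Reps Q Q') ∧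
      Disjoint (PrimReps Q (((p : ℤ)^2) • Q')) ((fun M => (p : ℤ) • M) '' (Reps Q Q')) ∧
      (Reps Q Q' ⊆ {U | IsUnit U.det}) ∧
      (∀ M ∈ Reps Q Q',
        InDoubleCoset ((p : ℤ) • (1 : Matrix (Fin m) (Fin m) ℤ)) ((p : ℤ) • M)) ∧
      (∀ M ∈ PrimReps Q (((p : ℤ)^2) • Q'),
        ∃ d : ℕ, 1 ≤ d ∧ d ≤ k ∧ InDoubleCoset (Dmat p m d) M) := by
  classical
  have hdetQ' : Q'.det = Q.det := hsim.1
  have hm0 : 0 < m := by omega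
  have hp0 : (0:ℤ) < (p:ℤ) := by exact_mod_cast hp.pos
  -- determinant of any representation of p²Q'
  have hdetA : ∀ A ∈ Reps Q (((p : ℤ)^2) • Q'), A.det.natAbs = p ^ m ∧ A.det ≠ 0 := by
    intro A hA
    have h1 : A.det ^ 2 * Q.det = ((p:ℤ)^m)^2 * Q.det := by
      have := congrArg Matrix.det hA
      rw [Matrix.det_mul, Matrix.det_mul, Matrix.det_transpose, Matrix.det_smul,
        hdetQ', Fintype.card_fin] at this
      calc A.det ^ 2 * Q.det = A.det * Q.det * A.det := by ring
        _ = ((p:ℤ)^2)^m * Q.det := this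
        _ = ((p:ℤ)^m)^2 * Q.det := by ring
    have hsq : A.det ^ 2 = ((p:ℤ)^m)^2 := mul_right_cancel₀ hQns h1
    have hnat : A.det.natAbs ^ 2 = (p ^ m) ^ 2 := by
      have := congrArg Int.natAbs hsq
      simpa [Int.natAbs_pow] using this
    have habs : A.det.natAbs = p ^ m := Nat.pow_left_injective (by norm_num) hnat
    refine ⟨habs, fun h0 => ?_⟩
    rw [h0] at habs
    simp only [Int.natAbs_zero] at habs
    exact (pow_ne_zero m hp.pos.ne') habs.symm
  -- units claim
  have part3 : Reps Q Q' ⊆ {U : Matrix (Fin m) (Fin m) ℤ | IsUnit U.det} := by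
    intro M hM
    have h1 : M.det * M.det * Q.det = 1 * Q.det := by
      have := congrArg Matrix.det hM
      rw [Matrix.det_mul, Matrix.det_mul, Matrix.det_transpose, hdetQ'] at this
      calc M.det * M.det * Q.det = M.det * Q.det * M.det := by ring
        _ = 1 * Q.det := by rw [this]; ring
    exact IsUnit.of_mul_eq_one _ (mul_right_cancel₀ hQns h1)
  -- membership of p•M
  have himg : ∀ M ∈ Reps Q Q', ((p:ℤ) • M) ∈ Reps Q (((p : ℤ)^2) • Q') := by
    intro M hM
    show ((p:ℤ) • M)ᵀ * Q * ((p:ℤ) • M) = ((p:ℤ)^2) • Q'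
    rw [Matrix.transpose_smul, Matrix.smul_mul, Matrix.smul_mul, Matrix.mul_smul,
      smul_smul, hM, sq]
  constructor
  · -- part 1 : the union decomposition
    ext A
    constructor
    · intro hA
      by_cases hg : Finset.gcd Finset.univ (fun ij : Fin m × Fin m => A ij.1 ij.2) = 1
      · exact Or.inl ⟨hA, hg⟩
      · right
        obtain ⟨habs, hdet0⟩ := hdetA A hA
        set g : ℤ := Finset.gcd Finset.univ (fun ij : Fin m × Fin m => A ij.1 ij.2) with hgdef
        have hgdvd : ∀ i j, g ∣ A i j := by
          intro i j
          exact Finset.gcd_dvd (Finset.mem_univ (⟨i, j⟩ : Fin m × Fin m))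
        -- A = g • A₁ hence g^m ∣ det A
        have hA1 : A = g • (Matrix.of fun i j => A i j / g) := by
          ext i j
          simp only [Matrix.smul_apply, Matrix.of_apply, smul_eq_mul]
          exact (Int.mul_ediv_cancel' (hgdvd i j)).symm
        have hgm : g ^ m ∣ A.det := by
          refine ⟨(Matrix.of fun i j => A i j / g).det, ?_⟩
          conv_lhs => rw [hA1]
          rw [Matrix.det_smul, Fintype.card_fin]
          
        have hgnat : g.natAbs ^ m ∣ p ^ m := by
          have := Int.natAbs_dvd_natAbs.mpr hgm
          rwa [Int.natAbs_pow, habs] at this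
        have hgp : g.natAbs ∣ p := (Nat.pow_dvd_pow_iff (by omega)).mp hgnat
        have hgne1 : g.natAbs ≠ 1 := by
          intro h1
          have hnorm : normalize g = g := Finset.normalize_gcd
          have hgnn : 0 ≤ g := by
            rw [← hnorm, ← Int.abs_eq_normalize]
            exact abs_nonneg g
          omega
        have hgeq : g.natAbs = p := ((Nat.dvd_prime hp).mp hgp).resolve_left hgne1
        have hpdvd : ∀ i j, (p:ℤ) ∣ A i j := by
          intro i j
          have : (g.natAbs : ℤ) ∣ A i j := (Int.natAbs_dvd).mpr (hgdvd i j)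
          rwa [hgeq] at this
        set M : Matrix (Fin m) (Fin m) ℤ := Matrix.of fun i j => A i j / (p:ℤ) with hMdef
        have hAM : A = (p:ℤ) • M := by
          ext i j
          simp only [hMdef, Matrix.smul_apply, Matrix.of_apply, smul_eq_mul]
          exact (Int.mul_ediv_cancel' (hpdvd i j)).symm
        have hMrep : M ∈ Reps Q Q' := by
          show Mᵀ * Q * M = Q'
          have h2 : ((p:ℤ)^2) • (Mᵀ * Q * M) = ((p:ℤ)^2) • Q' := by
            rw [← hA]
            conv_rhs => rw [hAM]
            rw [Matrix.transpose_smul, Matrix.smul_mul, Matrix.smul_mul, Matrix.mul_smul,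
              smul_smul, ← sq]
          have hp2 : ((p:ℤ)^2) ≠ 0 := by positivity
          ext i j
          have := congrFun (congrFun h2 i) j
          simp only [Matrix.smul_apply, smul_eq_mul] at this
          exact mul_left_cancel₀ hp2 this
        exact ⟨M, hMrep, hAM.symm⟩
    · rintro (hA | ⟨M, hM, rfl⟩)
      · exact hA.1
      · exact himg M hM
  refine ⟨?_, part3, ?_, ?_⟩
  · -- part 2 : disjointness
    rw [Set.disjoint_left]
    rintro A ⟨_, hgcd⟩ ⟨M, _, rfl⟩
    have : (p:ℤ) ∣ (1:ℤ) := by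
      rw [← hgcd]
      apply Finset.dvd_gcd
      intro ij _
      exact ⟨M ij.1 ij.2, rfl⟩
    have := Int.le_of_dvd one_pos this
    have := hp.one_lt
    omega
  · -- part 4
    intro M hM
    exact ⟨M, 1, part3 hM, by simp, by rw [Matrix.mul_one, Matrix.mul_smul, Matrix.mul_one]⟩
  · -- part 5
    rintro A ⟨hA, hgcd⟩
    obtain ⟨habs, hdet0⟩ := hdetA A hA
    obtain ⟨U, V, w, hU, hV, hUDV⟩ := exists_UDV A hdet0
    -- |w i| = p ^ (e i)
    have hprodw : (∏ i, w i).natAbs = p ^ m := by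
      have h1 : A.det = U.det * (∏ i, w i) * V.det := by
        rw [hUDV, Matrix.det_mul, Matrix.det_mul, Matrix.det_diagonal]
      have h2 := congrArg Int.natAbs h1
      rw [Int.natAbs_mul, Int.natAbs_mul, Int.isUnit_iff_natAbs_eq.mp hU,
        Int.isUnit_iff_natAbs_eq.mp hV, one_mul, mul_one, habs] at h2
      exact h2.symm
    have hprodnat : (∏ i, w i).natAbs = ∏ i, (w i).natAbs :=
      map_prod Int.natAbsHom w Finset.univ
    have hwd : ∀ i, (w i).natAbs ∣ p ^ m := by
      intro i
      rw [← hprodw, hprodnat]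
      exact Finset.dvd_prod_of_mem _ (Finset.mem_univ i)
    have hex : ∀ i, ∃ e ≤ m, (w i).natAbs = p ^ e := fun i =>
      (Nat.dvd_prime_pow hp).mp (hwd i)
    choose e he hwe using hex
    have hwne : ∀ i, w i ≠ 0 := by
      intro i h0
      have := hwe i
      rw [h0] at this
      simp only [Int.natAbs_zero] at this
      exact (pow_ne_zero (e i) hp.pos.ne') this.symm
    -- bound e i ≤ 2 via the adjugate trick
    have hBA : (Q'.adjugate * Aᵀ * Q) * A = ((p:ℤ)^2 * Q.det) • 1 := by
      rw [Matrix.mul_assoc, Matrix.mul_assoc, ← Matrix.mul_assoc Aᵀ Q A, hA,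
        Matrix.mul_smul, Matrix.adjugate_mul, hdetQ', smul_smul]
    have hCD : ∃ C : Matrix (Fin m) (Fin m) ℤ,
        C * Matrix.diagonal w = ((p:ℤ)^2 * Q.det) • 1 := by
      have hinvV : Invertible V := V.invertibleOfIsUnitDet hV
      refine ⟨V * (Q'.adjugate * Aᵀ * Q) * U, ?_⟩
      have h3 : (V * (Q'.adjugate * Aᵀ * Q) * U) * Matrix.diagonal w * V
          = (((p:ℤ)^2 * Q.det) • 1) * V := by
        calc (V * (Q'.adjugate * Aᵀ * Q) * U) * Matrix.diagonal w * V
            = V * ((Q'.adjugate * Aᵀ * Q) * (U * Matrix.diagonal w * V)) := by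
              simp only [Matrix.mul_assoc]
          _ = V * ((Q'.adjugate * Aᵀ * Q) * A) := by rw [← hUDV]
          _ = V * (((p:ℤ)^2 * Q.det) • 1) := by
              rw [hBA]
          _ = (((p:ℤ)^2 * Q.det) • 1) * V := by
              rw [Matrix.mul_smul, Matrix.smul_mul, Matrix.mul_one, Matrix.one_mul]
      have h5 := congrArg (fun X => X * ⅟V) h3
      simp only [Matrix.mul_assoc, mul_invOf_self, Matrix.mul_one] at h5
      simp only [Matrix.mul_assoc]
      exact h5
    have he2 : ∀ i, e i ≤ 2 := by
      obtain ⟨C, hC⟩ := hCD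
      intro i
      have h4 : w i ∣ (p:ℤ)^2 * Q.det := by
        refine ⟨C i i, ?_⟩
        have := congrFun (congrFun hC i) i
        rw [Matrix.mul_diagonal] at this
        simp only [Matrix.smul_apply, Matrix.one_apply_eq, smul_eq_mul, mul_one] at this
        rw [← this]; ring
      have h5 : p ^ (e i) ∣ p ^ 2 * Q.det.natAbs := by
        have := Int.natAbs_dvd_natAbs.mpr h4
        rwa [hwe i, Int.natAbs_mul, Int.natAbs_pow, Int.natAbs_natCast] at this
      have hcop : Nat.Coprime (p ^ (e i)) Q.det.natAbs := by
        apply Nat.Coprime.pow_left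
        rw [Nat.Prime.coprime_iff_not_dvd hp]
        intro hdvd
        exact hpd ((Int.natCast_dvd_natCast.mpr hdvd).trans (Int.natAbs_dvd.mpr dvd_rfl))
      have h6 : p ^ (e i) ∣ p ^ 2 := hcop.dvd_of_dvd_mul_right h5
      exact (Nat.pow_dvd_pow_iff_le_right hp.one_lt).mp h6
    -- sum of exponents is m
    have hsum : ∑ i, e i = m := by
      have h1 : ∏ i, p ^ (e i) = p ^ m := by
        rw [← hprodw, hprodnat]
        exact Finset.prod_congr rfl fun i _ => (hwe i).symm
      rw [Finset.prod_pow_eq_pow_sum] at h1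
      exact Nat.pow_right_injective hp.two_le h1
    -- counting
    set d0 := (Finset.univ.filter (fun i => e i = 0)).card with hd0
    set d1 := (Finset.univ.filter (fun i => e i = 1)).card with hd1
    set d2 := (Finset.univ.filter (fun i => e i = 2)).card with hd2
    have hcount : d0 + d1 + d2 = m := by
      rw [hd0, hd1, hd2, Finset.card_filter, Finset.card_filter, Finset.card_filter,
        ← Finset.sum_add_distrib, ← Finset.sum_add_distrib]
      have : ∀ i : Fin m, ((if e i = 0 then 1 else 0) + (if e i = 1 then 1 else 0))
          + (if e i = 2 then 1 else 0) = 1 := by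
        intro i
        have := he2 i
        split_ifs <;> omega
      rw [Finset.sum_congr rfl fun i _ => this i]
      simp
    have hsum2 : d1 + 2 * d2 = m := by
      have h1 : ∑ i, e i = ∑ i : Fin m, ((if e i = 1 then 1 else 0)
          + 2 * (if e i = 2 then 1 else 0)) := by
        apply Finset.sum_congr rfl
        intro i _
        have := he2 i
        split_ifs <;> omega
      rw [hsum] at h1
      rw [hd1, hd2, Finset.card_filter, Finset.card_filter, Finset.mul_sum,
        ← Finset.sum_add_distrib]
      exact h1.symm
    have hd02 : d0 = d2 := by omega
    -- d0 ≥ 1 by primitivity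
    have hd0pos : 1 ≤ d0 := by
      by_contra h0
      have hempty : Finset.univ.filter (fun i => e i = 0) = ∅ :=
        Finset.card_eq_zero.mp (by omega)
      have hnz : ∀ i, e i ≠ 0 := by
        intro i hi
        have : i ∈ Finset.univ.filter (fun i => e i = 0) := by
          simp [hi]
        rw [hempty] at this
        exact absurd this (Finset.notMem_empty i)
      have hpw : ∀ i, (p:ℤ) ∣ w i := by
        intro i
        have h1 : p ∣ (w i).natAbs := by
          rw [hwe i]
          exact dvd_pow_self p (hnz i)
        exact (Int.natCast_dvd_natCast.mpr h1).trans (Int.natAbs_dvd.mpr dvd_rfl)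
      have hpA : ∀ i j, (p:ℤ) ∣ A i j := by
        intro i j
        rw [hUDV]
        rw [Matrix.mul_apply]
        apply Finset.dvd_sum
        intro l _
        rw [Matrix.mul_diagonal]
        exact Dvd.dvd.mul_right (Dvd.dvd.mul_left (hpw l) _) _
      have : (p:ℤ) ∣ 1 := by
        rw [← hgcd]
        exact Finset.dvd_gcd fun ij _ => hpA ij.1 ij.2
      have := Int.le_of_dvd one_pos this
      have := hp.one_lt
      omega
    refine ⟨d0, hd0pos, by omega, ?_⟩
    -- sort the exponents
    set σ : Equiv.Perm (Fin m) := Tuple.sort e with hσ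
    have hmono : Monotone (e ∘ σ) := Tuple.monotone_sort e
    have hshape := monotone_shape (e ∘ σ) hmono (fun i => he2 (σ i))
      (d := d0) (by rw [hd0]; exact card_filter_comp e σ 0)
      (by rw [hd02, hd2]; exact card_filter_comp e σ 2)
    -- sign matrix
    set ε : Fin m → ℤ := fun i => Int.sign (w i) with hε
    have hwsplit : Matrix.diagonal w =
        Matrix.diagonal ε * Matrix.diagonal (fun i => ((w i).natAbs : ℤ)) := by
      rw [Matrix.diagonal_mul_diagonal]
      exact congrArg Matrix.diagonal (funext fun i => (Int.sign_mul_natAbs (w i)).symm)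
    have hεunit : IsUnit (Matrix.diagonal ε).det := by
      rw [Matrix.det_diagonal]
      apply IsUnit.of_mul_eq_one (∏ i, ε i)
      rw [← Finset.prod_mul_distrib]
      rw [Finset.prod_eq_one]
      intro i _
      rcases lt_trichotomy (w i) 0 with h | h | h
      · simp [hε, Int.sign_eq_neg_one_of_neg h]
      · exact absurd h (hwne i)
      · simp [hε, Int.sign_eq_one_of_pos h]
    have hdiagv : Matrix.diagonal (fun i => ((w i).natAbs : ℤ)) =
        (σ⁻¹.permMatrix ℤ) * Dmat p m d0 * (σ.permMatrix ℤ) := by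
      have h2 : ∀ i : Fin m, ((w (σ i)).natAbs : ℤ) =
          if (i:ℕ) < d0 then 1 else if (i:ℕ) < m - d0 then (p:ℤ) else (p:ℤ)^2 := by
        intro i
        rw [hwe (σ i), show e (σ i) = (e ∘ σ) i from rfl, hshape i]
        split_ifs <;> push_cast <;> ring
      have h1 : Dmat p m d0 =
          Matrix.diagonal ((fun i => ((w i).natAbs : ℤ)) ∘ σ) :=
        congrArg Matrix.diagonal (funext fun i => (h2 i).symm)
      rw [h1]
      exact diagonal_perm _ σ
    refine ⟨U * Matrix.diagonal ε * (σ⁻¹.permMatrix ℤ), (σ.permMatrix ℤ) * V, ?_, ?_, ?_⟩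
    · rw [Matrix.det_mul, Matrix.det_mul]
      exact (hU.mul hεunit).mul (permMatrix_det_isUnit σ⁻¹)
    · rw [Matrix.det_mul]
      exact (permMatrix_det_isUnit σ).mul hV
    · rw [hUDV, hwsplit, hdiagv]
      noncomm_ring
end

section
/- Lemma 5.1: Let q and q'' be integral ternary quadratic forms with matrices Q and Q'', and let A ∈ ℤ^{3×3} satisfy ᵀA·Q·A = Q''. Then the induced algebra homomorphism φ_A : C(ℤ³,q'') → C(ℤ³,q) maps the special element t'' of C(ℤ³,q'') to (det A)·t, where t is the special element of C(ℤ³,q). -/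
open Matrix

/-- The special element `t = e₁e₂e₃ - e₃e₂e₁` of the Clifford algebra `C(ℤ³,q)`. -/
noncomputable def specialT (q : QuadraticForm ℤ (Fin 3 → ℤ)) : CliffordAlgebra q :=
  CliffordAlgebra.ι q (Pi.single 0 1) * CliffordAlgebra.ι q (Pi.single 1 1) *
      CliffordAlgebra.ι q (Pi.single 2 1) -
    CliffordAlgebra.ι q (Pi.single 2 1) * CliffordAlgebra.ι q (Pi.single 1 1) *
      CliffordAlgebra.ι q (Pi.single 0 1)

/-- The trilinear map `(x,y,z) ↦ ιx·ιy·ιz - ιz·ιy·ιx` on the Clifford algebra. -/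
noncomputable def Tmul (q : QuadraticForm ℤ (Fin 3 → ℤ)) :
    MultilinearMap ℤ (fun _ : Fin 3 => (Fin 3 → ℤ)) (CliffordAlgebra q) where
  toFun v := CliffordAlgebra.ι q (v 0) * CliffordAlgebra.ι q (v 1) * CliffordAlgebra.ι q (v 2) -
    CliffordAlgebra.ι q (v 2) * CliffordAlgebra.ι q (v 1) * CliffordAlgebra.ι q (v 0)
  map_update_add' := by
    intro inst v i x y
    obtain rfl := Subsingleton.elim inst (instDecidableEqFin 3)
    fin_cases i <;>
      simp (config := { decide := true }) only [Function.update_apply, if_true, if_false,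
        map_add, mul_add, add_mul] <;> abel
  map_update_smul' := by
    intro inst v i c x
    obtain rfl := Subsingleton.elim inst (instDecidableEqFin 3)
    fin_cases i <;>
      simp (config := { decide := true }) only [Function.update_apply, if_true, if_false,
        _root_.map_smul, smul_sub, smul_mul_assoc, mul_smul_comm]

theorem Tmul_apply (q : QuadraticForm ℤ (Fin 3 → ℤ)) (v : Fin 3 → (Fin 3 → ℤ)) :
    Tmul q v = CliffordAlgebra.ι q (v 0) * CliffordAlgebra.ι q (v 1) * CliffordAlgebra.ι q (v 2) -
      CliffordAlgebra.ι q (v 2) * CliffordAlgebra.ι q (v 1) * CliffordAlgebra.ι q (v 0) := rfl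

/-- The map `Tmul` is alternating. -/
noncomputable def Talt (q : QuadraticForm ℤ (Fin 3 → ℤ)) :
    (Fin 3 → ℤ) [⋀^Fin 3]→ₗ[ℤ] CliffordAlgebra q where
  toMultilinearMap := Tmul q
  map_eq_zero_of_eq' v i j h hij := by
    have h01 : v 0 = v 1 → Tmul q v = 0 := fun h => by
      rw [Tmul_apply, h, mul_assoc (CliffordAlgebra.ι q (v 2)), CliffordAlgebra.ι_sq_scalar,
        Algebra.commutes, sub_self]
    have h12 : v 1 = v 2 → Tmul q v = 0 := fun h => by
      rw [Tmul_apply, h, mul_assoc (CliffordAlgebra.ι q (v 0)), CliffordAlgebra.ι_sq_scalar,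
        Algebra.commutes, sub_self]
    have h02 : v 0 = v 2 → Tmul q v = 0 := fun h => by
      rw [Tmul_apply, h, sub_self]
    fin_cases i <;> fin_cases j <;>
      first
      | exact absurd rfl hij
      | exact h01 h
      | exact h12 h
      | exact h02 h
      | exact h01 h.symm
      | exact h12 h.symm
      | exact h02 h.symm

theorem Talt_apply (q : QuadraticForm ℤ (Fin 3 → ℤ)) (v : Fin 3 → (Fin 3 → ℤ)) :
    Talt q v = CliffordAlgebra.ι q (v 0) * CliffordAlgebra.ι q (v 1) * CliffordAlgebra.ι q (v 2) -
      CliffordAlgebra.ι q (v 2) * CliffordAlgebra.ι q (v 1) * CliffordAlgebra.ι q (v 0) := rfl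

/-- Any alternating 3-form on `ℤ³` is the determinant times its value on the standard basis. -/
theorem alt_eq_det_smul {N : Type*} [AddCommGroup N] [Module ℤ N]
    (g : (Fin 3 → ℤ) [⋀^Fin 3]→ₗ[ℤ] N) (v : Fin 3 → (Fin 3 → ℤ)) :
    g v = (Matrix.of fun i j => v j i).det • g (fun i => Pi.single i 1) := by
  set e := Pi.basisFun ℤ (Fin 3) with he
  have hes : ⇑e = fun i => Pi.single i 1 := by
    funext i
    simp [he]
  have key : g = (LinearMap.toSpanSingleton ℤ N (g e)).compAlternatingMap e.det := by
    apply Module.Basis.ext_alternating e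
    intro w hw
    have hb : Function.Bijective w := Finite.injective_iff_bijective.mp hw
    set σ : Equiv.Perm (Fin 3) := Equiv.ofBijective w hb with hσ
    have hwσ : (fun i => e (w i)) = ⇑e ∘ ⇑σ := by
      funext i; simp [hσ, Equiv.ofBijective]
    rw [hwσ, g.map_perm]
    simp [AlternatingMap.map_perm, Module.Basis.det_self, LinearMap.toSpanSingleton_apply]
    erw [one_smul]
  have hv := congrArg (fun F => F v) key
  simp only [LinearMap.compAlternatingMap_apply, LinearMap.toSpanSingleton_apply] at hv
  have hm : e.toMatrix v = Matrix.of fun i j => v j i := by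
    ext i j
    simp [Module.Basis.toMatrix_apply, he]
  rw [hv, Module.Basis.det_apply, hm, hes]
  simp only [← Int.cast_smul_eq_zsmul ℤ, Int.cast_id]

/-- Lemma 5.1: if `A ∈ R(q,q'')` then the induced homomorphism of Clifford algebras
`φ_A : C(ℤ³,q'') → C(ℤ³,q)` maps the special element `t''` to `(det A)·t`. -/
theorem lemma_5_1 (Q Q'' : Matrix (Fin 3) (Fin 3) ℤ)
    (hQI : IsIntegralQF Q) (hQ''I : IsIntegralQF Q'')
    (q q'' : QuadraticForm ℤ (Fin 3 → ℤ))
    (hq : ∀ x, 2 * q x = x ⬝ᵥ Q.mulVec x)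
    (hq'' : ∀ x, 2 * q'' x = x ⬝ᵥ Q''.mulVec x)
    (A : Matrix (Fin 3) (Fin 3) ℤ) (hA : Aᵀ * Q * A = Q'')
    (f : QuadraticMap.Isometry q'' q) (hf : ∀ x, f x = A.mulVec x) :
    CliffordAlgebra.map f (specialT q'') = A.det • specialT q := by
  have hT : CliffordAlgebra.map f (specialT q'') =
      Talt q (fun i => A.mulVec (Pi.single i 1)) := by
    simp only [specialT, map_sub, _root_.map_mul, CliffordAlgebra.map_apply_ι, Talt_apply]
    simp [hf]
  rw [hT, alt_eq_det_smul (Talt q) (fun i => A.mulVec (Pi.single i 1))]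
  have hmat : (Matrix.of fun i j => (A.mulVec (Pi.single j 1)) i) = A := by
    ext i j
    simp [Matrix.mulVec_single]
  rw [hmat]
  congr 1
end
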